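/- Let g : ℝ^d → ℝ be strictly convex, differentiable, and coercive (g(x) → +∞ as |x| → ∞). Then for every compact set K ⊆ ℝ^d there exists a strictly increasing function ω : [0,∞) → [0,∞) with ω(0) = 0 and ω(t) > 0 for t > 0, such that g(y) - g(x) - ⟨Dg(x), y - x⟩ ≥ ω(|y - x|) for all x, y ∈ K. -/

import Mathlib

theorem stmt_10 {d : ℕ} (g : EuclideanSpace ℝ (Fin d) → ℝ)
    (hconv : StrictConvexOn ℝ Set.univ g) (hdiff : Differentiable ℝ g)
    (hcoerc : Filter.Tendsto g (Filter.cocompact _) Filter.atTop)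
    (K : Set (EuclideanSpace ℝ (Fin d))) (hK : IsCompact K) :
    ∃ ω : ℝ → ℝ, StrictMonoOn ω (Set.Ici 0) ∧ ω 0 = 0 ∧
      (∀ t : ℝ, 0 < t → 0 < ω t) ∧ (∀ t : ℝ, 0 ≤ t → 0 ≤ ω t) ∧
      ∀ x ∈ K, ∀ y ∈ K, ω ‖y - x‖ ≤ g y - g x - fderiv ℝ g x (y - x) := by
  classical
  -- bound on K
  obtain ⟨R₀, hR₀⟩ := hK.isBounded.exists_norm_le
  set R : ℝ := max R₀ 0 with hRdef
  have hRnn : 0 ≤ R := le_max_right _ _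
  have hRK : ∀ x ∈ K, ‖x‖ ≤ R := fun x hx => (hR₀ x hx).trans (le_max_left _ _)
  set c : ℝ := 2 * R + 1 with hcdef
  have hc : 0 < c := by positivity
  -- gradient inequality
  have hgrad : ∀ x z : EuclideanSpace ℝ (Fin d), fderiv ℝ g x (z - x) ≤ g z - g x := by
    intro x z
    set φ : ℝ → ℝ := fun t => g (x + t • (z - x)) with hφ
    have hφconv : ConvexOn ℝ Set.univ φ := by
      have := hconv.convexOn.comp_affineMap
        ((AffineMap.lineMap x z : ℝ →ᵃ[ℝ] EuclideanSpace ℝ (Fin d)))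
      have heq : (g ∘ ⇑(AffineMap.lineMap x z : ℝ →ᵃ[ℝ] EuclideanSpace ℝ (Fin d))) = φ := by
        funext t
        simp [φ, AffineMap.lineMap_apply_module', add_comm]
      rw [Set.preimage_univ] at this
      rwa [heq] at this
    have hline : HasDerivAt (fun t : ℝ => x + t • (z - x)) (z - x) 0 := by
      simpa using ((hasDerivAt_id (0:ℝ)).smul_const (z - x)).const_add x
    have hφd : HasDerivAt φ (fderiv ℝ g x (z - x)) 0 := by
      have hx0 : HasFDerivAt g (fderiv ℝ g x) (x + (0:ℝ) • (z - x)) := by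
        simpa using (hdiff x).hasFDerivAt
      exact hx0.comp_hasDerivAt 0 hline
    have hsl := hφconv.le_slope_of_hasDerivAt (Set.mem_univ 0) (Set.mem_univ 1) one_pos hφd
    have hs : slope φ 0 1 = g z - g x := by simp [slope, φ]
    linarith [hsl.trans_eq hs]
  -- midpoint defect
  set E : EuclideanSpace ℝ (Fin d) × EuclideanSpace ℝ (Fin d) → ℝ := fun p => g p.1 + g p.2 - 2 * g ((2⁻¹ : ℝ) • (p.1 + p.2)) with hEdef
  have hEcont : Continuous E := by
    have hg := hdiff.continuous
    exact ((hg.comp continuous_fst).add (hg.comp continuous_snd)).sub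
      ((continuous_const.mul (hg.comp ((continuous_fst.add continuous_snd).const_smul (2⁻¹:ℝ)))))
  have hmid : ∀ x y : EuclideanSpace ℝ (Fin d), (2⁻¹ : ℝ) • (x + y) = (2⁻¹ : ℝ) • x + (2⁻¹ : ℝ) • y := by
    intro x y; rw [smul_add]
  have hE0 : ∀ p : EuclideanSpace ℝ (Fin d) × EuclideanSpace ℝ (Fin d), 0 ≤ E p := by
    intro p
    have := hconv.convexOn.2 (Set.mem_univ p.1) (Set.mem_univ p.2)
      (by norm_num : (0:ℝ) ≤ 2⁻¹) (by norm_num : (0:ℝ) ≤ 2⁻¹) (by norm_num)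
    simp only [smul_eq_mul] at this
    rw [hEdef]
    dsimp only
    rw [hmid]
    linarith
  have hEpos : ∀ p : EuclideanSpace ℝ (Fin d) × EuclideanSpace ℝ (Fin d), p.1 ≠ p.2 → 0 < E p := by
    intro p hne
    have := hconv.2 (Set.mem_univ p.1) (Set.mem_univ p.2) hne
      (by norm_num : (0:ℝ) < 2⁻¹) (by norm_num : (0:ℝ) < 2⁻¹) (by norm_num)
    simp only [smul_eq_mul] at this
    rw [hEdef]
    dsimp only
    rw [hmid]
    linarith
  -- Bregman divergence dominates E
  have hDE : ∀ x y : EuclideanSpace ℝ (Fin d), E (x, y) ≤ g y - g x - fderiv ℝ g x (y - x) := by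
    intro x y
    set z : EuclideanSpace ℝ (Fin d) := (2⁻¹ : ℝ) • (x + y) with hz
    have hzx : z - x = (2⁻¹ : ℝ) • (y - x) := by
      rw [hz]
      module
    have h1 : fderiv ℝ g x (z - x) ≤ g z - g x := hgrad x z
    have h2 : fderiv ℝ g x (z - x) = (2⁻¹ : ℝ) * fderiv ℝ g x (y - x) := by
      rw [hzx, map_smul, smul_eq_mul]
    rw [hEdef]
    dsimp only
    rw [← hz]
    linarith
  -- the sets S t
  set S : ℝ → Set (EuclideanSpace ℝ (Fin d) × EuclideanSpace ℝ (Fin d)) := fun t => (K ×ˢ K) ∩ {p | t ≤ ‖p.2 - p.1‖} with hSdef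
  have hScomp : ∀ t, IsCompact (S t) := by
    intro t
    rw [hSdef]
    exact (hK.prod hK).inter_right
      (isClosed_le continuous_const (continuous_snd.sub continuous_fst).norm)
  have hSmono : ∀ ⦃a b : ℝ⦄, a ≤ b → S b ⊆ S a := by
    intro a b hab p hp
    exact ⟨hp.1, le_trans hab hp.2⟩
  -- m t
  set m : ℝ → ℝ := fun t => sInf (insert 1 (E '' S t)) with hmdef
  have hbdd : ∀ t, BddBelow (insert 1 (E '' S t)) :=
    fun t => (((hScomp t).image hEcont).bddBelow).insert 1
  have hm0 : ∀ t, 0 ≤ m t := by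
    intro t
    refine le_csInf ⟨1, Set.mem_insert 1 _⟩ ?_
    rintro b (rfl | ⟨p, hp, rfl⟩)
    · norm_num
    · exact hE0 p
  have hmmono : Monotone m := by
    intro a b hab
    exact csInf_le_csInf (hbdd a) ⟨1, Set.mem_insert 1 _⟩
      (Set.insert_subset_insert (Set.image_mono (hSmono hab)))
  have hmpos : ∀ t : ℝ, 0 < t → 0 < m t := by
    intro t ht
    rcases Set.eq_empty_or_nonempty (S t) with hemp | hne
    · rw [hmdef]
      simp [hemp]
    · obtain ⟨p, hpS, hpmin⟩ := (hScomp t).exists_isMinOn hne hEcont.continuousOn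
      have hpne : p.1 ≠ p.2 := by
        intro h
        have : t ≤ ‖p.2 - p.1‖ := hpS.2
        rw [h, sub_self, norm_zero] at this
        linarith
      have hEp : 0 < E p := hEpos p hpne
      have hlow : ∀ b ∈ insert 1 (E '' S t), min 1 (E p) ≤ b := by
        rintro b (rfl | ⟨q, hq, rfl⟩)
        · exact min_le_left _ _
        · exact le_trans (min_le_right _ _) (hpmin hq)
      exact lt_of_lt_of_le (lt_min one_pos hEp) (le_csInf ⟨1, Set.mem_insert 1 _⟩ hlow)
  have hmle : ∀ x ∈ K, ∀ y ∈ K, m ‖y - x‖ ≤ E (x, y) := by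
    intro x hx y hy
    exact csInf_le (hbdd _)
      (Set.mem_insert_of_mem _ ⟨(x, y), ⟨⟨hx, hy⟩, by simp⟩, rfl⟩)
  -- the density h and ω
  set h : ℝ → ℝ := fun s => m s / c with hhdef
  have hhmono : Monotone h := fun a b hab => (div_le_div_iff_of_pos_right hc).2 (hmmono hab)
  have hh0 : ∀ s, 0 ≤ h s := fun s => div_nonneg (hm0 s) hc.le
  have hhpos : ∀ s : ℝ, 0 < s → 0 < h s := fun s hs => div_pos (hmpos s hs) hc
  have hint : ∀ a b : ℝ, IntervalIntegrable h MeasureTheory.volume a b :=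
    fun a b => (hhmono.monotoneOn _).intervalIntegrable
  refine ⟨fun t => ∫ s in (0:ℝ)..t, h s, ?_, ?_, ?_, ?_, ?_⟩
  · -- strict mono
    intro a ha b hb hab
    have hsplit : (∫ s in (0:ℝ)..a, h s) + (∫ s in a..b, h s) = ∫ s in (0:ℝ)..b, h s :=
      intervalIntegral.integral_add_adjacent_intervals (hint 0 a) (hint a b)
    have hpos : 0 < ∫ s in a..b, h s := by
      refine intervalIntegral.intervalIntegral_pos_of_pos_on (hint a b) ?_ hab
      intro s hs
      exact hhpos s (lt_of_le_of_lt ha hs.1)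
    linarith
  · exact intervalIntegral.integral_same
  · intro t ht
    refine intervalIntegral.intervalIntegral_pos_of_pos_on (hint 0 t) ?_ ht
    intro s hs
    exact hhpos s hs.1
  · intro t ht
    exact intervalIntegral.integral_nonneg ht (fun s _ => hh0 s)
  · intro x hx y hy
    set t : ℝ := ‖y - x‖ with htdef
    have ht0 : 0 ≤ t := norm_nonneg _
    have htR : t ≤ 2 * R := by
      calc t ≤ ‖y‖ + ‖x‖ := norm_sub_le _ _
        _ ≤ R + R := add_le_add (hRK y hy) (hRK x hx)
        _ = 2 * R := by ring
    have h1 : (∫ s in (0:ℝ)..t, h s) ≤ ∫ s in (0:ℝ)..t, h t := by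
      refine intervalIntegral.integral_mono_on ht0 (hint 0 t) intervalIntegrable_const ?_
      intro s hs
      exact hhmono hs.2
    have h2 : (∫ _ in (0:ℝ)..t, h t) = t * h t := by
      simp [mul_comm]
    have h3 : t * h t ≤ m t := by
      have htc : t / c ≤ 1 := (div_le_one hc).2 (by linarith)
      calc t * h t = (t / c) * m t := by rw [hhdef]; ring
        _ ≤ 1 * m t := mul_le_mul_of_nonneg_right htc (hm0 t)
        _ = m t := one_mul _
    calc (∫ s in (0:ℝ)..t, h s) ≤ t * h t := h1.trans_eq h2
      _ ≤ m t := h3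
      _ ≤ E (x, y) := hmle x hx y hy
      _ ≤ g y - g x - fderiv ℝ g x (y - x) := hDE x y
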